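/- Let q, c, κ be non-negative integers with κ ≥ 1. Then every graph G with χ(G) > 2^q · max{c, κ} and χ^{(3)}(G) ≤ κ contains a long q-cover (ℒ_i : i ∈ [q]) of a set C ⊆ V(G) with χ(G[C]) > c. -/

import Mathlib

open SimpleGraph

/-! ### Basic operations: local complementation, pivoting, vertex-minors -/

/-- Local complementation at a vertex `v`: the adjacency between each pair of
neighbours of `v` is toggled. -/
def localComp {V : Type*} (G : SimpleGraph V) (v : V) : SimpleGraph V where
  Adj a b := (G.Adj a b ∧ ¬(G.Adj v a ∧ G.Adj v b)) ∨
    (a ≠ b ∧ ¬ G.Adj a b ∧ G.Adj v a ∧ G.Adj v b)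
  symm := by
    constructor
    rintro a b (⟨h1, h2⟩ | ⟨h1, h2, h3, h4⟩)
    · exact Or.inl ⟨h1.symm, fun hc => h2 ⟨hc.2, hc.1⟩⟩
    · exact Or.inr ⟨h1.symm, fun hc => h2 hc.symm, h4, h3⟩
  loopless := by
    constructor
    rintro a (⟨h1, _⟩ | ⟨h1, _⟩)
    · exact G.irrefl h1
    · exact h1 rfl

/-- Pivoting an edge `uv`: `G ∧ uv = G * u * v * u`. -/
def pivotG {V : Type*} (G : SimpleGraph V) (u v : V) : SimpleGraph V :=
  localComp (localComp (localComp G u) v) u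

/-- Finite simple graphs, concretely represented on `Fin n`. -/
abbrev FinGraph := Σ n : ℕ, SimpleGraph (Fin n)

/-- One step in the construction of a vertex-minor: pass to an isomorphic copy,
perform a local complementation, or delete a vertex. -/
def VMStep (G H : FinGraph) : Prop :=
  Nonempty (G.2 ≃g H.2) ∨
  (∃ v : Fin G.1, Nonempty ((localComp G.2 v) ≃g H.2)) ∨
  (∃ v : Fin G.1, Nonempty ((G.2.induce {u | u ≠ v}) ≃g H.2))

/-- One step in the construction of a pivot-minor: pass to an isomorphic copy,
pivot an edge, or delete a vertex. -/
def PMStep (G H : FinGraph) : Prop :=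
  Nonempty (G.2 ≃g H.2) ∨
  (∃ u v : Fin G.1, G.2.Adj u v ∧ Nonempty ((pivotG G.2 u v) ≃g H.2)) ∨
  (∃ v : Fin G.1, Nonempty ((G.2.induce {u | u ≠ v}) ≃g H.2))

/-- `H` is a vertex-minor of `G` (both given concretely on `Fin _`). -/
def IsVertexMinorFG (H G : FinGraph) : Prop := Relation.ReflTransGen VMStep G H

/-- `H` is a pivot-minor of `G` (both given concretely on `Fin _`). -/
def IsPivotMinorFG (H G : FinGraph) : Prop := Relation.ReflTransGen PMStep G H

/-- A finite graph represented concretely on `Fin (Nat.card V)`. -/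
noncomputable def toFinGraph {V : Type*} [Finite V] (G : SimpleGraph V) : FinGraph :=
  ⟨Nat.card V, G.comap (Finite.equivFin V).symm⟩

/-- `H` is a vertex-minor of `G`. -/
def HasVertexMinor {V W : Type*} [Finite V] [Finite W]
    (G : SimpleGraph V) (H : SimpleGraph W) : Prop :=
  IsVertexMinorFG (toFinGraph H) (toFinGraph G)

/-- `H` is a pivot-minor of `G`. -/
def HasPivotMinor {V W : Type*} [Finite V] [Finite W]
    (G : SimpleGraph V) (H : SimpleGraph W) : Prop :=
  IsPivotMinorFG (toFinGraph H) (toFinGraph G)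

/-- A class of finite graphs closed under isomorphism, local complementation and
vertex deletion. -/
def VertexMinorClosed (𝒢 : Set FinGraph) : Prop :=
  (∀ G ∈ 𝒢, ∀ H : FinGraph, Nonempty (G.2 ≃g H.2) → H ∈ 𝒢) ∧
  (∀ G ∈ 𝒢, ∀ v : Fin G.1, (⟨G.1, localComp G.2 v⟩ : FinGraph) ∈ 𝒢) ∧
  (∀ G ∈ 𝒢, ∀ v : Fin G.1, toFinGraph (G.2.induce {u | u ≠ v}) ∈ 𝒢)

/-- A class of finite graphs closed under isomorphism, pivoting and
vertex deletion. -/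
def PivotMinorClosed (𝒢 : Set FinGraph) : Prop :=
  (∀ G ∈ 𝒢, ∀ H : FinGraph, Nonempty (G.2 ≃g H.2) → H ∈ 𝒢) ∧
  (∀ G ∈ 𝒢, ∀ u v : Fin G.1, G.2.Adj u v → (⟨G.1, pivotG G.2 u v⟩ : FinGraph) ∈ 𝒢) ∧
  (∀ G ∈ 𝒢, ∀ v : Fin G.1, toFinGraph (G.2.induce {u | u ≠ v}) ∈ 𝒢)

/-! ### Chromatic data -/

/-- The chromatic number, as a natural number (graphs here are finite). -/
noncomputable def chi {V : Type*} (G : SimpleGraph V) : ℕ := G.chromaticNumber.toNat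

/-- The ball of radius `ρ` around `v`: all vertices at distance at most `ρ` from `v`. -/
def ballSet {V : Type*} (G : SimpleGraph V) (v : V) (ρ : ℕ) : Set V :=
  {u | ∃ p : G.Walk v u, p.length ≤ ρ}

/-- `χ^{(ρ)}(G)`: the largest chromatic number of a `ρ`-ball of `G`. -/
noncomputable def chiBall {V : Type*} (G : SimpleGraph V) (ρ : ℕ) : ℕ :=
  ⨆ v : V, chi (G.induce (ballSet G v ρ))

/-- The distance from `u` to `v` is at least `n` (in particular, this holds
vacuously for unreachable pairs). -/
def distGE {V : Type*} (G : SimpleGraph V) (u v : V) (n : ℕ) : Prop :=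
  ∀ p : G.Walk u v, n ≤ p.length

/-- A stable (independent) set of vertices. -/
def IsStableSet {V : Type*} (G : SimpleGraph V) (A : Set V) : Prop :=
  ∀ a ∈ A, ∀ b ∈ A, ¬ G.Adj a b

/-- `A` covers `B`: every vertex of `B` has a neighbour in `A`. -/
def Covers {V : Type*} (G : SimpleGraph V) (A B : Set V) : Prop :=
  ∀ b ∈ B, ∃ a ∈ A, G.Adj a b

/-- `A` and `B` are anti-complete: there are no edges between them. -/
def AntiComplete {V : Type*} (G : SimpleGraph V) (A B : Set V) : Prop :=
  ∀ a ∈ A, ∀ b ∈ B, ¬ G.Adj a b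

/-- An induced path of `G`, given as a walk: it is a path, and the only edges of `G`
between its vertices are the edges of the path. -/
def IsInducedPath {V : Type*} (G : SimpleGraph V) {a b : V} (p : G.Walk a b) : Prop :=
  p.IsPath ∧ ∀ x ∈ p.support, ∀ y ∈ p.support, G.Adj x y → p.toSubgraph.Adj x y
/-! ### Big cliques and bloated trees -/

/-- A big clique: a maximal clique (w.r.t. vertex inclusion) of size at least 3. -/
def IsBigClique {V : Type*} (G : SimpleGraph V) (s : Finset V) : Prop :=
  G.IsClique ↑s ∧ 3 ≤ s.card ∧ ∀ t : Finset V, G.IsClique ↑t → s ⊆ t → t = s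

/-- Two vertices are related when they lie in a common big clique. -/
def bigCliqueRel {V : Type*} (G : SimpleGraph V) (u v : V) : Prop :=
  u = v ∨ ∃ s : Finset V, IsBigClique G s ∧ u ∈ s ∧ v ∈ s

/-- The graph obtained by contracting every big clique to a single vertex. -/
def contractBigCliques {V : Type*} (G : SimpleGraph V) :
    SimpleGraph (Quot (bigCliqueRel G)) where
  Adj a b := a ≠ b ∧ ∃ u v, G.Adj u v ∧ Quot.mk _ u = a ∧ Quot.mk _ v = b
  symm := by
    constructor
    rintro a b ⟨hne, u, v, h, hu, hv⟩
    exact ⟨hne.symm, v, u, h.symm, hv, hu⟩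
  loopless := ⟨fun a h => h.1 rfl⟩

/-- A bloated tree: every edge is in at most one big clique, vertices of a big
`k`-clique have degree at most `k`, and contracting all big cliques yields a tree. -/
def IsBloatedTree {V : Type*} (T : SimpleGraph V) : Prop :=
  (∀ u v, T.Adj u v → ∀ s t : Finset V, IsBigClique T s → IsBigClique T t →
    u ∈ s → v ∈ s → u ∈ t → v ∈ t → s = t) ∧
  (∀ s : Finset V, IsBigClique T s → ∀ v ∈ s, (T.neighborSet v).ncard ≤ s.card) ∧
  (contractBigCliques T).IsTree

/-- A leaf: a vertex of degree at most 1. -/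
def IsLeaf {V : Type*} (G : SimpleGraph V) (v : V) : Prop :=
  (G.neighborSet v).ncard ≤ 1

/-- A branching vertex of a bloated tree: a vertex of degree at least 3 that is
not contained in a triangle. -/
def IsBranching {V : Type*} (G : SimpleGraph V) (v : V) : Prop :=
  3 ≤ (G.neighborSet v).ncard ∧ ¬ ∃ a b, G.Adj v a ∧ G.Adj v b ∧ G.Adj a b

/-! ### Dangling paths and contractions -/

/-- The path `p` dangles from `X`: the set of vertices outside `p` with a
neighbour on `p` is exactly `X`. -/
def DanglesFrom {V : Type*} (G : SimpleGraph V) {a b : V} (p : G.Walk a b)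
    (X : Set V) : Prop :=
  {v | v ∉ p.support ∧ ∃ u ∈ p.support, G.Adj v u} = X

/-- The path `p` dangles oddly from `X`: moreover every vertex of `X` has an odd
number of neighbours on `p`. -/
def DanglesOddly {V : Type*} (G : SimpleGraph V) {a b : V} (p : G.Walk a b)
    (X : Set V) : Prop :=
  DanglesFrom G p X ∧ ∀ x ∈ X, Odd ({u | u ∈ p.support ∧ G.Adj x u}.ncard)

/-- Contract the set `S` to the single vertex `a₀` (for `a₀ ∈ S` with `G[S]`
connected this is contraction of all edges inside `S`). -/
def contractSet {V : Type*} (G : SimpleGraph V) (S : Set V) (a₀ : V) :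
    SimpleGraph {w : V // w ∉ S ∨ w = a₀} where
  Adj u v := u ≠ v ∧
    ((u.1 ∉ S ∧ v.1 ∉ S ∧ G.Adj u.1 v.1) ∨
     (u.1 = a₀ ∧ v.1 ∉ S ∧ ∃ s ∈ S, G.Adj s v.1) ∨
     (v.1 = a₀ ∧ u.1 ∉ S ∧ ∃ s ∈ S, G.Adj u.1 s))
  symm := by
    constructor
    rintro u v ⟨hne, h⟩
    refine ⟨hne.symm, ?_⟩
    rcases h with ⟨h1, h2, h3⟩ | ⟨h1, h2, s, hs, hadj⟩ | ⟨h1, h2, s, hs, hadj⟩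
    · exact Or.inl ⟨h2, h1, h3.symm⟩
    · exact Or.inr (Or.inr ⟨h1, h2, s, hs, hadj.symm⟩)
    · exact Or.inr (Or.inl ⟨h1, h2, s, hs, hadj.symm⟩)
  loopless := ⟨fun u h => h.1 rfl⟩

/-! ### Ramsey numbers -/

/-- Every graph on `Fin N` contains a clique of size `n` or a stable set of size `m`. -/
def RamseyProp (N n m : ℕ) : Prop :=
  ∀ G : SimpleGraph (Fin N),
    (∃ s : Finset (Fin N), G.IsNClique n s) ∨ (∃ s : Finset (Fin N), Gᶜ.IsNClique m s)

/-- The Ramsey number `R(n,m)`: the least `N` such that every graph on at least `N`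
vertices contains a clique of size `n` or a stable set of size `m`. -/
noncomputable def ramsey (n m : ℕ) : ℕ := sInf {N | ∀ M, N ≤ M → RamseyProp M n m}

/-! ### Subdivided complete bipartite graphs and interfered versions -/

/-- The vertex set of (an interfered) `K¹_{n,m}`: the `x_i`, the `y_j`, and the
subdivision vertices `z_{i,j}`. -/
abbrev IVert (n m : ℕ) := Fin n ⊕ Fin m ⊕ Fin n × Fin m

/-- `K¹_{n,m}`: the complete bipartite graph `K_{n,m}` with every edge subdivided
exactly once. -/
def KOneBip (n m : ℕ) : SimpleGraph (IVert n m) :=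
  SimpleGraph.fromRel (fun a b => ∃ i j,
    (a = Sum.inl i ∧ b = Sum.inr (Sum.inr (i, j))) ∨
    (a = Sum.inr (Sum.inl j) ∧ b = Sum.inr (Sum.inr (i, j))))

/-- The pairs that may be adjacent in an interfered `K¹_{n,m}`. -/
def InterferedAllowed (n m : ℕ) (a b : IVert n m) : Prop :=
  (∃ i j, a = Sum.inl i ∧ b = Sum.inr (Sum.inr (i, j))) ∨
  (∃ i j, a = Sum.inr (Sum.inl j) ∧ b = Sum.inr (Sum.inr (i, j))) ∨
  (∃ (k i : Fin n) (j : Fin m), k < i ∧ a = Sum.inl k ∧ b = Sum.inr (Sum.inr (i, j)))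

/-- An interfered `K¹_{n,m}`: all edges `x_i z_{i,j}` and `z_{i,j} y_j` are present,
and all other edges are of the form `x_k z_{i,j}` with `k < i`. -/
def IsInterfered (n m : ℕ) (G : SimpleGraph (IVert n m)) : Prop :=
  (∀ i j, G.Adj (Sum.inl i) (Sum.inr (Sum.inr (i, j)))) ∧
  (∀ i j, G.Adj (Sum.inr (Sum.inl j)) (Sum.inr (Sum.inr (i, j)))) ∧
  (∀ a b, G.Adj a b → InterferedAllowed n m a b ∨ InterferedAllowed n m b a)
/-! ### Long covers -/

/-- A long cover `(L⁰, L¹, L², L³)` of a set `C`. -/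
def IsLongCover {V : Type*} (G : SimpleGraph V) (L : Fin 4 → Set V) (C : Set V) : Prop :=
  (∀ i j : Fin 4, i ≠ j → Disjoint (L i) (L j)) ∧
  (∀ i : Fin 4, Disjoint (L i) C) ∧
  (G.induce (L 0)).Connected ∧
  Covers G (L 0) (L 1) ∧ Covers G (L 1) (L 2) ∧ Covers G (L 2) (L 3) ∧
  Covers G (L 3) C ∧
  AntiComplete G C (L 0) ∧ AntiComplete G C (L 1) ∧ AntiComplete G C (L 2) ∧
  AntiComplete G (L 0) (L 2) ∧ AntiComplete G (L 0) (L 3) ∧ AntiComplete G (L 1) (L 3)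

/-- A long `q`-cover of a set `C`. -/
def IsLongQCover {V : Type*} (G : SimpleGraph V) {q : ℕ}
    (ℒ : Fin q → Fin 4 → Set V) (C : Set V) : Prop :=
  (∀ i, IsLongCover G (ℒ i) C) ∧
  (∀ i j, i ≠ j →
    Disjoint (ℒ i 0 ∪ ℒ i 1 ∪ ℒ i 2 ∪ ℒ i 3) (ℒ j 0 ∪ ℒ j 1 ∪ ℒ j 2 ∪ ℒ j 3)) ∧
  (∀ i j, i < j →
    AntiComplete G (ℒ j 0 ∪ ℒ j 1 ∪ ℒ j 2) (ℒ i 0 ∪ ℒ i 1 ∪ ℒ i 2 ∪ ℒ i 3))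

/-! ### Multicovers -/

/-- A multicover `(N_x : x ∈ X)` of a set `C`, where `X` is presented as an
injective tuple `x : Fin m → V` (whose ordering is the total order on `X`). -/
def IsMulticover {V : Type*} (G : SimpleGraph V) {m : ℕ}
    (x : Fin m → V) (N : Fin m → Set V) (C : Set V) : Prop :=
  Function.Injective x ∧
  (∀ i, N i ⊆ G.neighborSet (x i)) ∧
  (∀ i, x i ∉ C) ∧
  (∀ i j, x i ∉ N j) ∧
  (∀ i, Disjoint (N i) C) ∧
  (∀ i j, i ≠ j → Disjoint (N i) (N j)) ∧
  (∀ i j, ¬ G.Adj (x i) (x j)) ∧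
  (∀ i, ∀ u ∈ C, ¬ G.Adj (x i) u) ∧
  (∀ i, ∀ u ∈ C, ∃ w ∈ N i, G.Adj w u) ∧
  (∀ i j, i < j → ∀ u ∈ N i, ¬ G.Adj (x j) u)

/-- A pure multicover: no `x ∈ X` has a neighbour in `N_y` for `y ≠ x`. -/
def IsPureMC {V : Type*} (G : SimpleGraph V) {m : ℕ}
    (x : Fin m → V) (N : Fin m → Set V) : Prop :=
  ∀ i j, i ≠ j → ∀ u ∈ N i, ¬ G.Adj (x j) u

/-- An impure multicover: for `x ≺ y`, `x` is complete to `N_y`. -/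
def IsImpureMC {V : Type*} (G : SimpleGraph V) {m : ℕ}
    (x : Fin m → V) (N : Fin m → Set V) : Prop :=
  ∀ i j, i < j → ∀ u ∈ N j, G.Adj (x i) u


/-! ### Auxiliary lemmas for Lemma 7.1 -/

section ChiBasic
variable {V : Type*} {W : Type*} [Finite V] [Finite W] (G : SimpleGraph V) (H : SimpleGraph W)

lemma LQC.chromaticNumber_ne_top : G.chromaticNumber ≠ ⊤ := by
  have := Fintype.ofFinite V
  exact (G.colorable_of_fintype.chromaticNumber_le.trans_lt (WithTop.coe_lt_top _)).ne

lemma LQC.chi_le_iff {n : ℕ} : chi G ≤ n ↔ G.Colorable n := by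
  rw [← chromaticNumber_le_iff_colorable]
  constructor
  · intro h
    calc G.chromaticNumber = (chi G : ℕ∞) :=
          (ENat.coe_toNat (LQC.chromaticNumber_ne_top G)).symm
    _ ≤ n := by exact_mod_cast h
  · exact ENat.toNat_le_of_le_coe

lemma LQC.colorable_chi : G.Colorable (chi G) := (LQC.chi_le_iff G).1 le_rfl

lemma LQC.chi_le_of_embedding (f : H ↪g G) : chi H ≤ chi G :=
  (LQC.chi_le_iff H).2 (SimpleGraph.Colorable.of_hom f.toHom (LQC.colorable_chi G))

lemma LQC.chi_eq_of_iso (f : H ≃g G) : chi H = chi G :=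
  le_antisymm (LQC.chi_le_of_embedding G H f.toEmbedding)
    (LQC.chi_le_of_embedding H G f.symm.toEmbedding)

end ChiBasic

section Induce
variable {V : Type*} (G : SimpleGraph V)

/-- The isomorphism between `(G.induce S).induce T` and `G.induce (val '' T)`. -/
noncomputable def LQC.induceInduceIso (S : Set V) (T : Set S) :
    (G.induce S).induce T ≃g G.induce (Subtype.val '' T) where
  toEquiv := Equiv.Set.image Subtype.val T Subtype.val_injective
  map_rel_iff' := by
    rintro ⟨⟨a, _⟩, _⟩ ⟨⟨b, _⟩, _⟩
    simp [Equiv.Set.image, Equiv.Set.imageOfInjOn]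

def LQC.induceEmb (S : Set V) : G.induce S ↪g G :=
  (G.induceUnivIso.toEmbedding).comp (G.induceHomOfLE (Set.subset_univ S))

variable [Finite V]

lemma LQC.chi_induce_mono {S T : Set V} (h : S ⊆ T) :
    chi (G.induce S) ≤ chi (G.induce T) :=
  LQC.chi_le_of_embedding _ _ (G.induceHomOfLE h)

lemma LQC.chi_induce_induce (S : Set V) (T : Set S) :
    chi ((G.induce S).induce T) = chi (G.induce (Subtype.val '' T)) :=
  LQC.chi_eq_of_iso _ _ (LQC.induceInduceIso G S T)

lemma LQC.chi_induce_univ : chi (G.induce Set.univ) = chi G :=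
  LQC.chi_eq_of_iso _ _ G.induceUnivIso

lemma LQC.chi_induce_union_le (A B : Set V) :
    chi (G.induce (A ∪ B)) ≤ chi (G.induce A) + chi (G.induce B) := by
  classical
  rw [LQC.chi_le_iff]
  obtain ⟨cA⟩ := LQC.colorable_chi (G.induce A)
  obtain ⟨cB⟩ := LQC.colorable_chi (G.induce B)
  refine ⟨⟨fun u => if h : u.1 ∈ A then Fin.castAdd _ (cA ⟨u.1, h⟩)
      else Fin.natAdd _ (cB ⟨u.1, u.2.resolve_left h⟩), ?_⟩⟩
  rintro ⟨a, ha⟩ ⟨b, hb⟩ hab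
  simp only [comap_adj, Function.Embedding.coe_subtype] at hab
  by_cases h1 : a ∈ A <;> by_cases h2 : b ∈ A <;>
    simp only [h1, h2, dif_pos, dif_neg, not_false_iff, ne_eq]
  · intro hc
    have : cA ⟨a, h1⟩ = cA ⟨b, h2⟩ := by
      have h3 := congrArg Fin.val hc
      simp only [Fin.coe_castAdd] at h3
      exact Fin.ext h3
    have hab' : (G.induce A).Adj ⟨a, h1⟩ ⟨b, h2⟩ := hab
    exact cA.valid hab' this
  · intro hc
    have h3 := congrArg Fin.val hc
    simp only [Fin.coe_castAdd, Fin.coe_natAdd] at h3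
    have := (cA ⟨a, h1⟩).isLt
    omega
  · intro hc
    have h3 := congrArg Fin.val hc
    simp only [Fin.coe_castAdd, Fin.coe_natAdd] at h3
    have := (cA ⟨b, h2⟩).isLt
    omega
  · intro hc
    have : cB ⟨a, ha.resolve_left h1⟩ = cB ⟨b, hb.resolve_left h2⟩ := by
      have h3 := congrArg Fin.val hc
      simp only [Fin.coe_natAdd] at h3
      exact Fin.ext (by omega)
    have hab' : (G.induce B).Adj ⟨a, ha.resolve_left h1⟩ ⟨b, hb.resolve_left h2⟩ := hab
    exact cB.valid hab' this

omit [Finite V] in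
lemma LQC.colorable_union_of_anticomplete {A B : Set V} {n : ℕ}
    (hAB : ∀ a ∈ A, ∀ b ∈ B, ¬ G.Adj a b)
    (hA : (G.induce A).Colorable n) (hB : (G.induce B).Colorable n) :
    (G.induce (A ∪ B)).Colorable n := by
  classical
  obtain ⟨cA⟩ := hA
  obtain ⟨cB⟩ := hB
  refine ⟨⟨fun u => if h : u.1 ∈ A then cA ⟨u.1, h⟩ else cB ⟨u.1, u.2.resolve_left h⟩, ?_⟩⟩
  rintro ⟨a, ha⟩ ⟨b, hb⟩ hab
  simp only [comap_adj, Function.Embedding.coe_subtype] at hab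
  by_cases h1 : a ∈ A <;> by_cases h2 : b ∈ A <;>
    simp only [h1, h2, dif_pos, dif_neg, not_false_iff, ne_eq]
  · have hab' : (G.induce A).Adj ⟨a, h1⟩ ⟨b, h2⟩ := hab
    exact fun hc => cA.valid hab' hc
  · exact fun _ => absurd hab (hAB a h1 b (hb.resolve_left h2))
  · exact fun _ => absurd hab.symm (hAB b h2 a (ha.resolve_left h1))
  · have hab' : (G.induce B).Adj ⟨a, ha.resolve_left h1⟩ ⟨b, hb.resolve_left h2⟩ := hab
    exact fun hc => cB.valid hab' hc

omit [Finite V] in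
lemma LQC.chi_empty_induce : chi (G.induce (∅ : Set V)) = 0 := by
  have : IsEmpty (∅ : Set V) := Set.isEmpty_coe_sort.2 rfl
  simp [chi, chromaticNumber_eq_zero_of_isEmpty]

lemma LQC.exists_connected_crit (S : Set V) (n : ℕ) (h : n < chi (G.induce S)) :
    ∃ T ⊆ S, (G.induce T).Connected ∧ n < chi (G.induce T) := by
  classical
  obtain ⟨m, hm⟩ : ∃ m, S.ncard = m := ⟨_, rfl⟩
  induction m using Nat.strong_induction_on generalizing S with
  | _ m IH =>
  subst hm
  have hSne : S.Nonempty := by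
    by_contra hs
    rw [Set.not_nonempty_iff_eq_empty] at hs
    rw [hs, LQC.chi_empty_induce] at h
    omega
  by_cases hconn : (G.induce S).Connected
  · exact ⟨S, le_rfl, hconn, h⟩
  · have hne : Nonempty S := hSne.to_subtype
    rw [connected_iff] at hconn
    push_neg at hconn
    have hpre : ¬ (G.induce S).Preconnected := fun hp => (not_isEmpty_iff.2 hne) (hconn hp)
    simp only [SimpleGraph.Preconnected, not_forall] at hpre
    obtain ⟨u, w, huw⟩ := hpre
    set A : Set V := {a | ∃ ha : a ∈ S, (G.induce S).Reachable u ⟨a, ha⟩} with hA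
    have hAS : A ⊆ S := fun a ha => ha.1
    set B : Set V := S \ A with hB
    have hSAB : S = A ∪ B := by
      ext a; constructor
      · intro ha
        by_cases h' : a ∈ A
        · exact Or.inl h'
        · exact Or.inr ⟨ha, h'⟩
      · rintro (h' | h')
        · exact hAS h'
        · exact h'.1
    have hanti : ∀ a ∈ A, ∀ b ∈ B, ¬ G.Adj a b := by
      rintro a ⟨ha, hra⟩ b hb hadj
      refine hb.2 ⟨hb.1, ?_⟩
      have : (G.induce S).Adj ⟨a, ha⟩ ⟨b, hb.1⟩ := hadj
      exact hra.trans this.reachable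
    have huA : u.1 ∈ A := ⟨u.2, by rw [Subtype.coe_eta]⟩
    have hwB : w.1 ∈ B := by
      refine ⟨w.2, fun hw => ?_⟩
      obtain ⟨hws, hr⟩ := hw
      rw [Subtype.coe_eta] at hr
      exact huw hr
    have hApr : A ⊂ S := ⟨hAS, fun hs => hwB.2 (hs hwB.1)⟩
    have hBpr : B ⊂ S := ⟨Set.diff_subset, fun hs => (hs (hAS huA)).2 huA⟩
    have hmax : chi (G.induce S) ≤ max (chi (G.induce A)) (chi (G.induce B)) := by
      rw [hSAB, LQC.chi_le_iff]
      exact LQC.colorable_union_of_anticomplete G hanti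
        ((LQC.colorable_chi _).mono (le_max_left _ _))
        ((LQC.colorable_chi _).mono (le_max_right _ _))
    rcases le_max_iff.1 hmax with hc | hc
    · obtain ⟨T, hTA, hTc, hTchi⟩ := IH A.ncard
        (Set.ncard_lt_ncard hApr S.toFinite) A (lt_of_lt_of_le h hc) rfl
      exact ⟨T, hTA.trans hAS, hTc, hTchi⟩
    · obtain ⟨T, hTB, hTc, hTchi⟩ := IH B.ncard
        (Set.ncard_lt_ncard hBpr S.toFinite) B (lt_of_lt_of_le h hc) rfl
      exact ⟨T, hTB.trans (Set.diff_subset), hTc, hTchi⟩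

end Induce

section Dist
variable {U : Type*} (H : SimpleGraph U) (hconn : H.Connected) (v : U)
include hconn

lemma LQC.adj_dist_le {a b : U} (hadj : H.Adj a b) :
    H.dist v b ≤ H.dist v a + 1 := by
  calc H.dist v b ≤ H.dist v a + H.dist a b := hconn.dist_triangle
  _ = H.dist v a + 1 := by rw [dist_eq_one_iff_adj.2 hadj]

lemma LQC.dist_getVert_le {a u : U} (p : H.Walk a u) (i : ℕ) :
    H.dist v (p.getVert i) ≤ H.dist v a + i := by
  induction p generalizing i with
  | nil => simp [SimpleGraph.Walk.getVert_of_length_le]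
  | @cons a x u h q IH =>
    cases i with
    | zero => simp [SimpleGraph.Walk.getVert_zero]
    | succ i =>
      rw [SimpleGraph.Walk.getVert_cons_succ]
      calc H.dist v (q.getVert i) ≤ H.dist v x + i := IH i
      _ ≤ (H.dist v a + 1) + i := by
          have := LQC.adj_dist_le H hconn v h
          omega
      _ = H.dist v a + (i+1) := by omega

lemma LQC.exists_pred_of_dist {u : U} {n : ℕ} (h : H.dist v u = n + 1) :
    ∃ w, H.Adj w u ∧ H.dist v w = n := by
  obtain ⟨p, hp⟩ := hconn.exists_walk_length_eq_dist v u
  refine ⟨p.getVert n, ?_, ?_⟩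
  · have hlt : n < p.length := by omega
    have := p.adj_getVert_succ hlt
    rwa [show n + 1 = p.length by omega, p.getVert_length] at this
  · have h1 : H.dist v (p.getVert n) ≤ n := by
      have := LQC.dist_getVert_le H hconn v p n
      rwa [SimpleGraph.dist_self, Nat.zero_add] at this
    have h2 : H.dist v u ≤ H.dist v (p.getVert n) + 1 := by
      apply LQC.adj_dist_le H hconn v
      have hlt : n < p.length := by omega
      have := p.adj_getVert_succ hlt
      rwa [show n + 1 = p.length by omega, p.getVert_length] at this
    omega

lemma LQC.ball_reachable (m : ℕ) {u : U} (hu : H.dist v u ≤ m) :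
    (H.induce {w | H.dist v w ≤ m}).Reachable
      ⟨v, by simp [dist_self]⟩ ⟨u, hu⟩ := by
  obtain ⟨n, hn⟩ : ∃ n, H.dist v u = n := ⟨_, rfl⟩
  induction n using Nat.strong_induction_on generalizing u with
  | _ n IH =>
  cases n with
  | zero =>
    have : u = v := (hconn.dist_eq_zero_iff.1 hn).symm
    subst this
    rfl
  | succ k =>
    obtain ⟨w, hadj, hw⟩ := LQC.exists_pred_of_dist H hconn v hn
    have hwm : H.dist v w ≤ m := by omega
    have h1 := IH k (by omega) hwm hw
    have h2 : (H.induce {w | H.dist v w ≤ m}).Adj ⟨w, hwm⟩ ⟨u, hu⟩ := hadj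
    exact h1.trans h2.reachable

lemma LQC.ball_connected (m : ℕ) : (H.induce {w | H.dist v w ≤ m}).Connected := by
  rw [connected_iff]
  refine ⟨?_, ⟨⟨v, by simp [dist_self]⟩⟩⟩
  rintro ⟨a, ha⟩ ⟨b, hb⟩
  exact (LQC.ball_reachable H hconn v m ha).symm.trans (LQC.ball_reachable H hconn v m hb)

end Dist

section Levels
variable {U : Type*} [Finite U] (H : SimpleGraph U) (hconn : H.Connected) (v : U)
include hconn

lemma LQC.parity_class_colorable {m : ℕ}
    (hm : ∀ k, chi (H.induce {u | H.dist v u = k}) ≤ m)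
    (P : ℕ → Prop) (hP : ∀ a b, P a → P b → a ≤ b + 1 → b ≤ a + 1 → a = b) :
    (H.induce {u | P (H.dist v u)}).Colorable m := by
  classical
  have hcol : ∀ k, (H.induce {u | H.dist v u = k}).Colorable m :=
    fun k => (LQC.chi_le_iff _).1 (hm k)
  have col : ∀ k, (H.induce {u | H.dist v u = k}).Coloring (Fin m) :=
    fun k => (hcol k).some
  have aux : ∀ (k l : ℕ) (h : k = l) (x : U) (hx : H.dist v x = k) (hx' : H.dist v x = l),
      col k ⟨x, hx⟩ = col l ⟨x, hx'⟩ := by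
    rintro k l rfl x hx hx'; rfl
  refine ⟨⟨fun u => col (H.dist v u.1) ⟨u.1, rfl⟩, ?_⟩⟩
  rintro ⟨a, ha⟩ ⟨b, hb⟩ hadj hc
  have hadj' : H.Adj a b := hadj
  have h1 := LQC.adj_dist_le H hconn v hadj'
  have h2 := LQC.adj_dist_le H hconn v hadj'.symm
  have heq : H.dist v a = H.dist v b := hP _ _ ha hb h2 h1
  have hb' : H.dist v b = H.dist v a := heq.symm
  have := hc.trans (aux (H.dist v a) (H.dist v b) heq b hb' rfl).symm
  have hadj'' : (H.induce {u | H.dist v u = H.dist v a}).Adj ⟨a, rfl⟩ ⟨b, hb'⟩ := hadj'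
  exact (col (H.dist v a)).valid hadj'' this

lemma LQC.exists_level_large {m : ℕ} (h : 2 * m < chi H) :
    ∃ k, m < chi (H.induce {u | H.dist v u = k}) := by
  by_contra hcon
  push_neg at hcon
  have hE := LQC.parity_class_colorable H hconn v hcon (fun n => Even n)
    (by intro a b ha hb h1 h2; rw [Nat.even_iff] at ha hb; omega)
  have hO := LQC.parity_class_colorable H hconn v hcon (fun n => ¬ Even n)
    (by intro a b ha hb h1 h2; rw [Nat.even_iff] at ha hb; omega)
  have huniv : (Set.univ : Set U) = {u | Even (H.dist v u)} ∪ {u | ¬ Even (H.dist v u)} := by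
    ext u
    by_cases h' : Even (H.dist v u) <;>
      simp only [Set.mem_univ, Set.mem_union, Set.mem_setOf_eq, true_iff] <;> tauto
  have : chi H ≤ 2 * m := by
    rw [← LQC.chi_induce_univ H, huniv]
    calc chi (H.induce _) ≤ _ + _ := LQC.chi_induce_union_le H _ _
    _ ≤ m + m := Nat.add_le_add ((LQC.chi_le_iff _).2 hE) ((LQC.chi_le_iff _).2 hO)
    _ = 2 * m := by omega
  omega

end Levels

section Transfer
variable {V : Type*} (G : SimpleGraph V) (S : Set V)

lemma LQC.covers_image {A B : Set S} (h : Covers (G.induce S) A B) :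
    Covers G (Subtype.val '' A) (Subtype.val '' B) := by
  rintro x ⟨b, hb, rfl⟩
  obtain ⟨a, ha, hadj⟩ := h b hb
  exact ⟨a.1, ⟨a, ha, rfl⟩, hadj⟩

lemma LQC.anticomplete_image {A B : Set S} (h : AntiComplete (G.induce S) A B) :
    AntiComplete G (Subtype.val '' A) (Subtype.val '' B) := by
  rintro x ⟨a, ha, rfl⟩ y ⟨b, hb, rfl⟩ hadj
  exact h a ha b hb hadj

lemma LQC.connected_image {A : Set S} (h : ((G.induce S).induce A).Connected) :
    (G.induce (Subtype.val '' A)).Connected :=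
  (LQC.induceInduceIso G S A).connected_iff.1 h

lemma LQC.isLongCover_image {A : Fin 4 → Set S} {C : Set S}
    (h : IsLongCover (G.induce S) A C) :
    IsLongCover G (fun j => Subtype.val '' A j) (Subtype.val '' C) := by
  obtain ⟨h1, h2, h3, h4, h5, h6, h7, h8, h9, h10, h11, h12, h13⟩ := h
  exact ⟨fun i j hij => Set.disjoint_image_of_injective Subtype.val_injective (h1 i j hij),
    fun i => Set.disjoint_image_of_injective Subtype.val_injective (h2 i),
    LQC.connected_image G S h3,
    LQC.covers_image G S h4, LQC.covers_image G S h5, LQC.covers_image G S h6,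
    LQC.covers_image G S h7,
    LQC.anticomplete_image G S h8, LQC.anticomplete_image G S h9,
    LQC.anticomplete_image G S h10, LQC.anticomplete_image G S h11,
    LQC.anticomplete_image G S h12, LQC.anticomplete_image G S h13⟩

lemma LQC.image_ballSet_subset (w : S) (rho : ℕ) :
    Subtype.val '' ballSet (G.induce S) w rho ⊆ ballSet G w.1 rho := by
  rintro x ⟨u, ⟨p, hp⟩, rfl⟩
  exact ⟨p.map (LQC.induceEmb G S).toHom, (SimpleGraph.Walk.length_map _ _).trans_le hp⟩

end Transfer

section ChiBall
variable {V : Type} [Fintype V] (G : SimpleGraph V)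

lemma LQC.chi_ball_le_chiBall (w : V) :
    chi (G.induce (ballSet G w 3)) ≤ chiBall G 3 := by
  have h : chiBall G 3 = ⨆ v : V, chi (G.induce (ballSet G v 3)) := rfl
  rw [h]
  exact le_ciSup (f := fun v : V => chi (G.induce (ballSet G v 3)))
    (Set.Finite.bddAbove (Set.finite_range _)) w

lemma LQC.chiBall_induce_le (S : Set V) : chiBall (G.induce S) 3 ≤ chiBall G 3 := by
  cases isEmpty_or_nonempty S with
  | inl h =>
    rw [chiBall, ciSup_of_empty]
    exact bot_le
  | inr h =>
    apply ciSup_le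
    intro w
    calc chi ((G.induce S).induce (ballSet (G.induce S) w 3))
        = chi (G.induce (Subtype.val '' ballSet (G.induce S) w 3)) :=
          LQC.chi_induce_induce G S _
      _ ≤ chi (G.induce (ballSet G w.1 3)) :=
          LQC.chi_induce_mono G (LQC.image_ballSet_subset G S w 3)
      _ ≤ chiBall G 3 := LQC.chi_ball_le_chiBall G w.1

end ChiBall

lemma LQC.main_aux (q : ℕ) : ∀ (V : Type) [Fintype V] (c κ : ℕ), 1 ≤ κ →
    ∀ (G : SimpleGraph V), 2 ^ q * max c κ < chi G → chiBall G 3 ≤ κ →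
    ∃ (C : Set V) (ℒ : Fin q → Fin 4 → Set V),
      IsLongQCover G ℒ C ∧ c < chi (G.induce C) := by
  induction q with
  | zero =>
    intro V _ c κ hκ G hchi hball
    refine ⟨Set.univ, fun i => i.elim0,
      ⟨fun i => i.elim0, fun i => i.elim0, fun i => i.elim0⟩, ?_⟩
    rw [LQC.chi_induce_univ]
    have h1 : max c κ < chi G := by simpa using hchi
    have h2 := le_max_left c κ
    omega
  | succ q IH =>
    intro V _ c κ hκ G hchi hball
    set M := max c κ with hM
    have h0 : 2 ^ (q+1) * M < chi (G.induce Set.univ) := by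
      rw [LQC.chi_induce_univ]; exact hchi
    obtain ⟨S₀, -, hconn, hS₀⟩ := LQC.exists_connected_crit G Set.univ _ h0
    set H := G.induce S₀ with hH
    have hne : Nonempty S₀ := hconn.nonempty
    set v : S₀ := Classical.arbitrary _ with hv
    obtain ⟨k, hk⟩ : ∃ k, 2^q * M < chi (H.induce {u | H.dist v u = k}) := by
      apply LQC.exists_level_large H hconn v
      have : 2 * (2^q * M) = 2^(q+1) * M := by ring
      omega
    set K : Set V := Subtype.val '' {u | H.dist v u = k} with hK
    have hKchi : 2^q * M < chi (G.induce K) := by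
      rw [hK, ← LQC.chi_induce_induce]; exact hk
    have hκM : κ ≤ M := le_max_right _ _
    have hMq : M ≤ 2^q * M := by
      have h1 : 1 ≤ 2^q := Nat.one_le_two_pow
      calc M = 1 * M := (one_mul M).symm
      _ ≤ 2^q * M := Nat.mul_le_mul_right M h1
    have hk4 : 4 ≤ k := by
      by_contra hlt
      push_neg at hlt
      have hsub : K ⊆ ballSet G v.1 3 := by
        rintro x ⟨u, hu, rfl⟩
        obtain ⟨p, hp⟩ := hconn.exists_walk_length_eq_dist v u
        refine ⟨p.map (LQC.induceEmb G S₀).toHom, ?_⟩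
        refine (SimpleGraph.Walk.length_map _ _).trans_le ?_
        rw [hp]
        have : H.dist v u = k := hu
        omega
      have h1 := LQC.chi_induce_mono G hsub
      have h2 := LQC.chi_ball_le_chiBall G v.1
      omega
    obtain ⟨t, rfl⟩ : ∃ t, k = t + 4 := ⟨k - 4, by omega⟩
    haveI := Fintype.ofFinite ↥K
    have hballK : chiBall (G.induce K) 3 ≤ κ := le_trans (LQC.chiBall_induce_le G K) hball
    obtain ⟨C', ℒ', hQ', hc'⟩ := IH ↥K c κ hκ (G.induce K) hKchi hballK
    obtain ⟨hQ1, hQ2, hQ3⟩ := hQ'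
    set C : Set V := Subtype.val '' C' with hC
    have hcC : c < chi (G.induce C) := by rw [hC, ← LQC.chi_induce_induce]; exact hc'
    have hCK : C ⊆ K := by rw [hC]; exact Subtype.coe_image_subset _ _
    -- helper lemmas about distance-defined image sets
    have hanti : ∀ (P Q : ℕ → Prop), (∀ a b, P a → Q b → a ≤ b+1 → b ≤ a+1 → False) →
        AntiComplete G (Subtype.val '' {u : S₀ | P (H.dist v u)})
          (Subtype.val '' {u : S₀ | Q (H.dist v u)}) := by
      intro P Q hPQ
      rintro x ⟨a, ha, rfl⟩ y ⟨b, hb, rfl⟩ hadj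
      have hadj' : H.Adj a b := hadj
      exact hPQ _ _ ha hb (LQC.adj_dist_le H hconn v hadj'.symm)
        (LQC.adj_dist_le H hconn v hadj')
    have hdisj : ∀ (P Q : ℕ → Prop), (∀ n, P n → Q n → False) →
        Disjoint (Subtype.val '' {u : S₀ | P (H.dist v u)})
          (Subtype.val '' {u : S₀ | Q (H.dist v u)}) := by
      intro P Q hPQ
      rw [Set.disjoint_left]
      rintro x ⟨a, ha, rfl⟩ ⟨b, hb, hba⟩
      have hba' : b = a := Subtype.val_injective hba
      subst hba'
      exact hPQ _ ha hb
    have hcov : ∀ (P : ℕ → Prop) (n m : ℕ), n = m + 1 → P m →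
        Covers G (Subtype.val '' {u : S₀ | P (H.dist v u)})
          (Subtype.val '' {u : S₀ | H.dist v u = n}) := by
      intro P n m hnm hPm
      rintro x ⟨u, hu, rfl⟩
      have hu' : H.dist v u = m + 1 := by rw [← hnm]; exact hu
      obtain ⟨w, hadj, hw⟩ := LQC.exists_pred_of_dist H hconn v hu'
      refine ⟨w.1, ⟨w, ?_, rfl⟩, hadj⟩
      show P (H.dist v w)
      rw [hw]; exact hPm
    set newL : Fin 4 → Set V :=
      ![Subtype.val '' {u : S₀ | H.dist v u ≤ t},
        Subtype.val '' {u : S₀ | H.dist v u = t+1},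
        Subtype.val '' {u : S₀ | H.dist v u = t+2},
        Subtype.val '' {u : S₀ | H.dist v u = t+3}] with hnewL
    have hnewsub : ∀ j : Fin 4, newL j ⊆
        Subtype.val '' {u : S₀ | H.dist v u ≤ t + 3} := by
      intro j
      fin_cases j <;>
        exact Set.image_mono (fun u hu => by simp only [Set.mem_setOf_eq] at hu ⊢; omega)
    have hnewsub2 : ∀ j : Fin 4, j ≠ 3 → newL j ⊆
        Subtype.val '' {u : S₀ | H.dist v u ≤ t + 2} := by
      intro j hj
      fin_cases j
      · exact Set.image_mono (fun u hu => by simp only [Set.mem_setOf_eq] at hu ⊢; omega)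
      · exact Set.image_mono (fun u hu => by simp only [Set.mem_setOf_eq] at hu ⊢; omega)
      · exact Set.image_mono (fun u hu => by simp only [Set.mem_setOf_eq] at hu ⊢; omega)
      · exact absurd rfl hj
    have hKgap : AntiComplete G K (Subtype.val '' {u : S₀ | H.dist v u ≤ t + 2}) := by
      rw [hK]
      exact hanti (fun n => n = t+4) (fun n => n ≤ t+2) (fun a b h1 h2 h3 h4 => by omega)
    have hKdisj : Disjoint K (Subtype.val '' {u : S₀ | H.dist v u ≤ t + 3}) := by
      rw [hK]
      exact hdisj (fun n => n = t+4) (fun n => n ≤ t+3) (fun n h1 h2 => by omega)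
    -- the new long cover
    have hnewcover : IsLongCover G newL C := by
      refine ⟨?_, ?_, ?_, ?_, ?_, ?_, ?_, ?_, ?_, ?_, ?_, ?_, ?_⟩
      · -- pairwise disjoint
        have d01 := hdisj (fun n => n ≤ t) (fun n => n = t+1) (fun n h1 h2 => by omega)
        have d02 := hdisj (fun n => n ≤ t) (fun n => n = t+2) (fun n h1 h2 => by omega)
        have d03 := hdisj (fun n => n ≤ t) (fun n => n = t+3) (fun n h1 h2 => by omega)
        have d12 := hdisj (fun n => n = t+1) (fun n => n = t+2) (fun n h1 h2 => by omega)
        have d13 := hdisj (fun n => n = t+1) (fun n => n = t+3) (fun n h1 h2 => by omega)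
        have d23 := hdisj (fun n => n = t+2) (fun n => n = t+3) (fun n h1 h2 => by omega)
        intro i j hne'
        fin_cases i <;> fin_cases j <;>
          first
            | exact absurd rfl hne'
            | exact d01 | exact d02 | exact d03 | exact d12 | exact d13 | exact d23
            | exact d01.symm | exact d02.symm | exact d03.symm
            | exact d12.symm | exact d13.symm | exact d23.symm
      · -- disjoint from C
        intro i
        exact hKdisj.symm.mono (hnewsub i) hCK
      · -- connected
        show (G.induce (Subtype.val '' {u : S₀ | H.dist v u ≤ t})).Connected
        exact LQC.connected_image G S₀ (LQC.ball_connected H hconn v t)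
      · exact hcov (fun n => n ≤ t) (t+1) t rfl le_rfl
      · exact hcov (fun n => n = t+1) (t+2) (t+1) (by omega) rfl
      · exact hcov (fun n => n = t+2) (t+3) (t+2) (by omega) rfl
      · -- L3 covers C
        intro b hb
        obtain ⟨u, hu, rfl⟩ := hCK hb
        have hu' : H.dist v u = (t+3) + 1 := by
          have : H.dist v u = t + 4 := hu
          omega
        obtain ⟨w, hadj, hw⟩ := LQC.exists_pred_of_dist H hconn v hu'
        exact ⟨w.1, ⟨w, hw, rfl⟩, hadj⟩
      · -- C anti L0
        refine fun a ha b hb hadj => hKgap a (hCK ha) b (hnewsub2 0 (by decide) hb) hadj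
      · refine fun a ha b hb hadj => hKgap a (hCK ha) b (hnewsub2 1 (by decide) hb) hadj
      · refine fun a ha b hb hadj => hKgap a (hCK ha) b (hnewsub2 2 (by decide) hb) hadj
      · -- L0 anti L2
        exact hanti (fun n => n ≤ t) (fun n => n = t+2) (fun a b h1 h2 h3 h4 => by omega)
      · exact hanti (fun n => n ≤ t) (fun n => n = t+3) (fun a b h1 h2 h3 h4 => by omega)
      · exact hanti (fun n => n = t+1) (fun n => n = t+3) (fun a b h1 h2 h3 h4 => by omega)
    -- assemble
    refine ⟨C, Fin.lastCases newL (fun i j => Subtype.val '' ℒ' i j), ⟨?_, ?_, ?_⟩, hcC⟩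
    · intro i
      rcases Fin.eq_castSucc_or_eq_last i with ⟨i', rfl⟩ | rfl
      · simp only [Fin.lastCases_castSucc]
        exact LQC.isLongCover_image G K (hQ1 i')
      · simp only [Fin.lastCases_last]
        exact hnewcover
    · intro i j hne'
      rcases Fin.eq_castSucc_or_eq_last i with ⟨i', rfl⟩ | rfl <;>
        rcases Fin.eq_castSucc_or_eq_last j with ⟨j', rfl⟩ | rfl
      · simp only [Fin.lastCases_castSucc]
        have hne'' : i' ≠ j' := fun h => hne' (congrArg _ h)
        have := Set.disjoint_image_of_injective Subtype.val_injective (hQ2 i' j' hne'')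
        simpa only [Set.image_union] using this
      · simp only [Fin.lastCases_castSucc, Fin.lastCases_last]
        have hsubK : Subtype.val '' ℒ' i' 0 ∪ Subtype.val '' ℒ' i' 1 ∪
            Subtype.val '' ℒ' i' 2 ∪ Subtype.val '' ℒ' i' 3 ⊆ K := by
          refine Set.union_subset (Set.union_subset (Set.union_subset ?_ ?_) ?_) ?_ <;>
            exact Subtype.coe_image_subset _ _
        have hsubN : newL 0 ∪ newL 1 ∪ newL 2 ∪ newL 3 ⊆
            Subtype.val '' {u : S₀ | H.dist v u ≤ t + 3} := by
          refine Set.union_subset (Set.union_subset (Set.union_subset ?_ ?_) ?_) ?_ <;>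
            apply hnewsub
        exact (hKdisj.mono hsubK hsubN)
      · simp only [Fin.lastCases_castSucc, Fin.lastCases_last]
        have hsubK : Subtype.val '' ℒ' j' 0 ∪ Subtype.val '' ℒ' j' 1 ∪
            Subtype.val '' ℒ' j' 2 ∪ Subtype.val '' ℒ' j' 3 ⊆ K := by
          refine Set.union_subset (Set.union_subset (Set.union_subset ?_ ?_) ?_) ?_ <;>
            exact Subtype.coe_image_subset _ _
        have hsubN : newL 0 ∪ newL 1 ∪ newL 2 ∪ newL 3 ⊆
            Subtype.val '' {u : S₀ | H.dist v u ≤ t + 3} := by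
          refine Set.union_subset (Set.union_subset (Set.union_subset ?_ ?_) ?_) ?_ <;>
            apply hnewsub
        exact (hKdisj.mono hsubK hsubN).symm
      · exact absurd rfl hne'
    · intro i j hij
      rcases Fin.eq_castSucc_or_eq_last j with ⟨j', rfl⟩ | rfl
      · rcases Fin.eq_castSucc_or_eq_last i with ⟨i', rfl⟩ | rfl
        · simp only [Fin.lastCases_castSucc]
          have hij' : i' < j' := by
            simpa only [Fin.castSucc_lt_castSucc_iff] using hij
          have := LQC.anticomplete_image G K (hQ3 i' j' hij')
          simpa only [Set.image_union] using this
        · exact absurd hij (Fin.castSucc_lt_last j').asymm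
      · rcases Fin.eq_castSucc_or_eq_last i with ⟨i', rfl⟩ | rfl
        · simp only [Fin.lastCases_castSucc, Fin.lastCases_last]
          intro a ha b hb hadj
          have haN : a ∈ Subtype.val '' {u : S₀ | H.dist v u ≤ t + 2} := by
            rcases ha with (ha | ha) | ha
            · exact hnewsub2 0 (by decide) ha
            · exact hnewsub2 1 (by decide) ha
            · exact hnewsub2 2 (by decide) ha
          have hbK : b ∈ K := by
            rcases hb with ((hb | hb) | hb) | hb <;>
              exact Subtype.coe_image_subset _ _ hb
          exact hKgap b hbK a haN hadj.symm
        · exact absurd hij (lt_irrefl _)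

/-- **Lemma 7.1.** Every graph with `χ(G) > 2^q·max{c,κ}` and `χ^{(3)}(G) ≤ κ`
contains a long `q`-cover of a set `C` with `χ(C) > c`. -/
theorem long_q_cover_exists (V : Type) [Fintype V] (q c κ : ℕ) (hκ : 1 ≤ κ)
    (G : SimpleGraph V) (hchi : 2 ^ q * max c κ < chi G) (hball : chiBall G 3 ≤ κ) :
    ∃ (C : Set V) (ℒ : Fin q → Fin 4 → Set V),
      IsLongQCover G ℒ C ∧ c < chi (G.induce C) :=
  LQC.main_aux q V c κ hκ G hchi hball
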